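/- Let (B, Δ_B) be a quantum semigroup (B a unital C*-algebra, Δ_B : B → B ⊗ B coassociative unital *-homomorphism) and let V = (v_{k,l}) ∈ Mₙ(B) be a representation, i.e. Δ_B(v_{k,l}) = Σ_r v_{k,r} ⊗ v_{r,l}, with V*V = 1. Then for any c ∈ B and any k,l, the element c ⊗ v_{k,l} of B ⊗ B lies in the linear span of { (a ⊗ 1)Δ_B(b) : a, b ∈ B }. -/

import Mathlib

open scoped TensorProduct

/-- Let `(B, Δ)` be a quantum semigroup and `V = (v_{k,l}) ∈ Mₙ(B)` a representation
(`Δ(v_{k,l}) = Σ_r v_{k,r} ⊗ v_{r,l}`) with `V*V = 1`.  Then for any `c ∈ B` and any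
`k, l`, the element `c ⊗ v_{k,l}` lies in the span of `{(a ⊗ 1)Δ(b) : a, b ∈ B}`. -/
theorem isometric_rep_left_density
    {B : Type*}
    [NormedRing B] [StarRing B] [CStarRing B] [NormedAlgebra ℂ B] [StarModule ℂ B] [CompleteSpace B]
    (Δ : B →ₐ[ℂ] B ⊗[ℂ] B)
    (hΔ : (Algebra.TensorProduct.assoc ℂ ℂ ℂ B B B).toAlgHom.comp
            ((Algebra.TensorProduct.map Δ (AlgHom.id ℂ B)).comp Δ)
        = (Algebra.TensorProduct.map (AlgHom.id ℂ B) Δ).comp Δ)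
    {n : ℕ} (v : Fin n → Fin n → B)
    (hrep : ∀ k l, Δ (v k l) = ∑ r, v k r ⊗ₜ[ℂ] v r l)
    (hisom : (Matrix.of v).conjTranspose * Matrix.of v = 1)
    (c : B) (k l : Fin n) :
    c ⊗ₜ[ℂ] v k l ∈
      Submodule.span ℂ {x : B ⊗[ℂ] B | ∃ a b : B, x = (a ⊗ₜ[ℂ] (1 : B)) * Δ b} := by
  have key : c ⊗ₜ[ℂ] v k l
      = ∑ r, ((c * star (v r k)) ⊗ₜ[ℂ] (1 : B)) * Δ (v r l) := by
    have h1 : ∀ s, ∑ r, star (v r k) * v r s = if k = s then 1 else 0 := by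
      intro s
      have h := congrFun (congrFun hisom k) s
      simpa [Matrix.mul_apply, Matrix.conjTranspose_apply, Matrix.one_apply] using h
    calc c ⊗ₜ[ℂ] v k l
        = ∑ s, (c * if k = s then 1 else 0) ⊗ₜ[ℂ] v s l := by
          rw [Finset.sum_eq_single k]
          · simp
          · intro s _ hs; simp [Ne.symm hs]
          · simp
      _ = ∑ s, (∑ r, c * (star (v r k) * v r s)) ⊗ₜ[ℂ] v s l := by
          refine Finset.sum_congr rfl fun s _ => ?_
          rw [← Finset.mul_sum, h1 s]
      _ = ∑ r, ∑ s, (c * (star (v r k) * v r s)) ⊗ₜ[ℂ] v s l := by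
          rw [Finset.sum_comm]
          refine Finset.sum_congr rfl fun s _ => ?_
          rw [TensorProduct.sum_tmul]
      _ = ∑ r, ((c * star (v r k)) ⊗ₜ[ℂ] (1 : B)) * Δ (v r l) := by
          refine Finset.sum_congr rfl fun r _ => ?_
          rw [hrep r l, Finset.mul_sum]
          refine Finset.sum_congr rfl fun s _ => ?_
          simp [Algebra.TensorProduct.tmul_mul_tmul, mul_assoc]
  rw [key]
  exact Submodule.sum_mem _ fun r _ =>
    Submodule.subset_span ⟨c * star (v r k), v r l, rfl⟩
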